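/- For every real t > 1 and every ξ > 0 there exists a constant C_ξ > 0 such that for all a, b ∈ ℝ^N one has ‖ ‖a+b‖^{t−2}(a+b) − ‖a‖^{t−2} a ‖ ≤ ξ ‖a‖^{t−1} + C_ξ ‖b‖^{t−1}, where ‖z‖^{t−2} z is understood to be 0 when z = 0. -/

import Mathlib

open Real

private lemma norm_Fmap_aux {E : Type*} [NormedAddCommGroup E] [NormedSpace ℝ E]
    (t : ℝ) (ht : 1 < t) (x : E) : ‖(‖x‖ ^ (t-2)) • x‖ = ‖x‖ ^ (t-1) := by
  rcases eq_or_ne x 0 with rfl | hx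
  · simp [Real.zero_rpow (by linarith : t - 1 ≠ 0)]
  · have hx0 : (0:ℝ) < ‖x‖ := norm_pos_iff.mpr hx
    rw [norm_smul, Real.norm_eq_abs, abs_of_nonneg (Real.rpow_nonneg (norm_nonneg x) _)]
    have : ‖x‖ ^ (t-2) * ‖x‖ ^ (1:ℝ) = ‖x‖ ^ (t-2+1) := (Real.rpow_add hx0 _ _).symm
    rw [Real.rpow_one] at this
    rw [this]
    congr 1
    ring

private lemma cont_Fmap {E : Type*} [NormedAddCommGroup E] [NormedSpace ℝ E]
    (t : ℝ) (ht : 1 < t) : Continuous fun x : E => (‖x‖ ^ (t-2)) • x := by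
  rw [continuous_iff_continuousAt]
  intro x
  rcases eq_or_ne x 0 with rfl | hx
  · have h0 : (‖(0:E)‖ ^ (t-2)) • (0:E) = 0 := smul_zero _
    unfold ContinuousAt
    simp only [norm_zero, smul_zero]
    refine squeeze_zero_norm (f := fun y : E => (‖y‖ ^ (t-2)) • y) (a := fun y : E => ‖y‖ ^ (t-1))
      (fun y => le_of_eq (norm_Fmap_aux t ht y)) ?_
    · have h1 : Filter.Tendsto (fun r : ℝ => r ^ (t-1)) (nhds 0) (nhds ((0:ℝ) ^ (t-1))) :=
        (Real.continuousAt_rpow_const 0 (t-1) (Or.inr (by linarith))).tendsto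
      rw [Real.zero_rpow (by linarith : t - 1 ≠ 0)] at h1
      exact h1.comp tendsto_norm_zero
  · have h1 : ContinuousAt (fun y : E => ‖y‖ ^ (t-2)) x :=
      (Real.continuousAt_rpow_const ‖x‖ (t-2) (Or.inl (norm_ne_zero_iff.mpr hx))).comp
        continuous_norm.continuousAt
    exact h1.smul continuousAt_id

private lemma hom_Fmap {E : Type*} [NormedAddCommGroup E] [NormedSpace ℝ E]
    (t : ℝ) (c : ℝ) (hc : 0 < c) (x : E) :
    (‖c • x‖ ^ (t-2)) • (c • x) = (c ^ (t-1)) • ((‖x‖ ^ (t-2)) • x) := by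
  rw [norm_smul, Real.norm_eq_abs, abs_of_pos hc,
    Real.mul_rpow hc.le (norm_nonneg x), smul_smul, smul_smul]
  congr 1
  have hcc : c ^ (t-2) * c ^ (1:ℝ) = c ^ (t-2+1) := (Real.rpow_add hc _ _).symm
  rw [Real.rpow_one] at hcc
  have hcc2 : c ^ (t-2) * c = c ^ (t-1) := by
    rw [hcc]; congr 1; ring
  rw [mul_right_comm, hcc2]

theorem stmt12 (N : ℕ) (t : ℝ) (ht : 1 < t) :
    ∀ ξ > (0:ℝ), ∃ C > (0:ℝ), ∀ a b : EuclideanSpace ℝ (Fin N),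
      ‖(‖a + b‖ ^ (t - 2)) • (a + b) - (‖a‖ ^ (t - 2)) • a‖
        ≤ ξ * ‖a‖ ^ (t - 1) + C * ‖b‖ ^ (t - 1) := by
  intro ξ hξ
  classical
  set E := EuclideanSpace ℝ (Fin N) with hE
  set F : E → E := fun x => (‖x‖ ^ (t-2)) • x with hF
  have hFc : Continuous F := cont_Fmap t ht
  set G : E × E → ℝ := fun p => ‖F (p.1 + p.2) - F p.1‖ - ξ * ‖p.1‖ ^ (t-1) with hG
  have hGc : Continuous G := by
    apply Continuous.sub
    · exact ((hFc.comp (continuous_fst.add continuous_snd)).sub (hFc.comp continuous_fst)).norm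
    · exact continuous_const.mul
        (continuous_fst.norm.rpow_const (fun x => Or.inr (by linarith)))
  set S : Set (E × E) := {p | ‖p.1‖ + ‖p.2‖ = 1} with hS
  have hSc : IsCompact S := by
    have hclosed : IsClosed S :=
      isClosed_eq (continuous_fst.norm.add continuous_snd.norm) continuous_const
    have hbdd : Bornology.IsBounded S := by
      apply (Metric.isBounded_closedBall (x := (0 : E × E)) (r := 1)).subset
      intro p hp
      simp only [Metric.mem_closedBall, dist_zero_right]
      have h1 : (0:ℝ) ≤ ‖p.1‖ := norm_nonneg _
      have h2 : (0:ℝ) ≤ ‖p.2‖ := norm_nonneg _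
      have hps : ‖p.1‖ + ‖p.2‖ = 1 := hp
      calc ‖p‖ = max ‖p.1‖ ‖p.2‖ := rfl
        _ ≤ 1 := max_le (by linarith) (by linarith)
    exact Metric.isCompact_of_isClosed_isBounded hclosed hbdd
  -- key bound on S
  obtain ⟨C, hC, hkey⟩ : ∃ C > (0:ℝ), ∀ p ∈ S, G p ≤ C * ‖p.2‖ ^ (t-1) := by
    obtain ⟨M, hM⟩ : ∃ M, ∀ p ∈ S, G p ≤ M := by
      obtain ⟨M, hM⟩ := (hSc.bddAbove_image hGc.continuousOn)
      exact ⟨M, fun p hp => hM (Set.mem_image_of_mem G hp)⟩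
    set K : Set (E × E) := S ∩ {p | 0 ≤ G p} with hK
    have hKc : IsCompact K := hSc.inter_right (isClosed_le continuous_const hGc)
    by_cases hKne : K.Nonempty
    · obtain ⟨p₀, hp₀, hmin⟩ := hKc.exists_isMinOn hKne (continuous_snd.norm.continuousOn)
      have hδpos : 0 < ‖p₀.2‖ := by
        rcases hp₀ with ⟨hp₀S, hp₀G⟩
        apply norm_pos_iff.mpr
        intro h2
        have h1 : ‖p₀.1‖ = 1 := by
          have := hp₀S
          simp only [hS, Set.mem_setOf_eq, h2, norm_zero, add_zero] at this
          exact this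
        have hGp0 : G p₀ = -(ξ * 1) := by
          simp only [hG, h2, add_zero, sub_self, norm_zero, h1,
            Real.one_rpow, zero_sub]
        have hp₀G' : 0 ≤ G p₀ := hp₀G
        rw [hGp0] at hp₀G'
        linarith
      set δ := ‖p₀.2‖ with hδ
      have hδt : 0 < δ ^ (t-1) := Real.rpow_pos_of_pos hδpos _
      refine ⟨max M 1 / δ ^ (t-1), by positivity, ?_⟩
      intro p hp
      by_cases hGp : G p ≤ 0
      · exact le_trans hGp (by positivity)
      · have hpK : p ∈ K := ⟨hp, le_of_lt (not_le.mp hGp)⟩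
        have hδle : δ ≤ ‖p.2‖ := hmin hpK
        have hrle : δ ^ (t-1) ≤ ‖p.2‖ ^ (t-1) :=
          Real.rpow_le_rpow hδpos.le hδle (by linarith)
        calc G p ≤ M := hM p hp
          _ ≤ max M 1 := le_max_left _ _
          _ = max M 1 / δ ^ (t-1) * δ ^ (t-1) := by field_simp
          _ ≤ max M 1 / δ ^ (t-1) * ‖p.2‖ ^ (t-1) := by
              apply mul_le_mul_of_nonneg_left hrle (by positivity)
    · refine ⟨1, one_pos, ?_⟩
      intro p hp
      have : ¬ (0 ≤ G p) := fun h => hKne ⟨p, hp, h⟩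
      have h1 : G p < 0 := not_le.mp this
      have h2 : (0:ℝ) ≤ ‖p.2‖ ^ (t-1) := Real.rpow_nonneg (norm_nonneg _) _
      linarith
  refine ⟨C, hC, ?_⟩
  intro a b
  by_cases hab : ‖a‖ + ‖b‖ = 0
  · have ha : a = 0 := norm_eq_zero.mp (by
      have := norm_nonneg a; have := norm_nonneg b; linarith)
    have hb : b = 0 := norm_eq_zero.mp (by
      have := norm_nonneg a; have := norm_nonneg b; linarith)
    subst ha; subst hb
    simp [Real.zero_rpow (by linarith : t - 1 ≠ 0)]
  · have hlm : 0 < ‖a‖ + ‖b‖ := lt_of_le_of_ne (by positivity) (Ne.symm hab)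
    set lam : ℝ := ‖a‖ + ‖b‖ with hlam
    set a' : E := lam⁻¹ • a with ha'
    set b' : E := lam⁻¹ • b with hb'
    have hinv : 0 < lam⁻¹ := inv_pos.mpr hlm
    have hna' : ‖a'‖ = lam⁻¹ * ‖a‖ := by
      rw [ha', norm_smul, Real.norm_eq_abs, abs_of_pos hinv]
    have hnb' : ‖b'‖ = lam⁻¹ * ‖b‖ := by
      rw [hb', norm_smul, Real.norm_eq_abs, abs_of_pos hinv]
    have hpS : (a', b') ∈ S := by
      simp only [hS, Set.mem_setOf_eq]
      rw [hna', hnb', ← mul_add]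
      field_simp
      exact hlam.symm
    have hkeyp := hkey (a', b') hpS
    have hkey2 : ‖F (a' + b') - F a'‖ ≤ ξ * ‖a'‖ ^ (t-1) + C * ‖b'‖ ^ (t-1) := by
      have : G (a', b') = ‖F (a' + b') - F a'‖ - ξ * ‖a'‖ ^ (t-1) := rfl
      linarith [hkeyp, this ▸ hkeyp]
    have hsa : lam • a' = a := by rw [ha', smul_smul]; field_simp; exact one_smul _ _
    have hsb : lam • b' = b := by rw [hb', smul_smul]; field_simp; exact one_smul _ _
    have hFa : F a = (lam ^ (t-1)) • F a' := by
      rw [← hsa]; exact hom_Fmap t lam hlm a'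
    have hFab : F (a + b) = (lam ^ (t-1)) • F (a' + b') := by
      rw [← hsa, ← hsb, ← smul_add]; exact hom_Fmap t lam hlm (a' + b')
    have hlamt : (0:ℝ) ≤ lam ^ (t-1) := Real.rpow_nonneg hlm.le _
    have hnorm : ‖F (a + b) - F a‖ = lam ^ (t-1) * ‖F (a' + b') - F a'‖ := by
      rw [hFab, hFa, ← smul_sub, norm_smul, Real.norm_eq_abs, abs_of_nonneg hlamt]
    have hna : ‖a‖ = lam * ‖a'‖ := by rw [hna']; field_simp
    have hnb : ‖b‖ = lam * ‖b'‖ := by rw [hnb']; field_simp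
    have hra : ‖a‖ ^ (t-1) = lam ^ (t-1) * ‖a'‖ ^ (t-1) := by
      rw [hna, Real.mul_rpow hlm.le (norm_nonneg _)]
    have hrb : ‖b‖ ^ (t-1) = lam ^ (t-1) * ‖b'‖ ^ (t-1) := by
      rw [hnb, Real.mul_rpow hlm.le (norm_nonneg _)]
    have goal : ‖F (a + b) - F a‖ ≤ ξ * ‖a‖ ^ (t-1) + C * ‖b‖ ^ (t-1) := by
      rw [hnorm, hra, hrb]
      calc lam ^ (t-1) * ‖F (a' + b') - F a'‖
          ≤ lam ^ (t-1) * (ξ * ‖a'‖ ^ (t-1) + C * ‖b'‖ ^ (t-1)) :=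
            mul_le_mul_of_nonneg_left hkey2 hlamt
        _ = ξ * (lam ^ (t-1) * ‖a'‖ ^ (t-1)) + C * (lam ^ (t-1) * ‖b'‖ ^ (t-1)) := by ring
    exact goal
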